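/- For the Bannai–Ito recurrence coefficients with parameters 𝔞 = α+iβ, 𝔟 = γ+iδ, 𝔠 = α-iβ, 𝔡 = γ-iδ (α, β, γ, δ real), the recurrence coefficient c_n = -i(2𝔞+1-A_n-C_n) is real for every nonnegative integer n; explicitly, for n even, c_n = 2β - (n+4α+2)(β-δ)/(n+2α+2γ+2) - n(β+δ)/(n+2α+2γ+1). -/

import Mathlib

open Complex

/-- Bannai–Ito recurrence coefficient `Aₙ`. -/
noncomputable def Acoef (a b c d : ℂ) (n : ℕ) : ℂ :=
  if Even n then
    ((n : ℂ) + 2*a + 2*c + 2) * ((n : ℂ) + 2*a + 2*d + 2) / (2 * ((n : ℂ) + a + b + c + d + 2))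
  else
    ((n : ℂ) + 2*a + 2*b + 2) * ((n : ℂ) + 2*a + 2*b + 2*c + 2*d + 3)
      / (2 * ((n : ℂ) + a + b + c + d + 2))

/-- Bannai–Ito recurrence coefficient `Cₙ`. -/
noncomputable def Ccoef (a b c d : ℂ) (n : ℕ) : ℂ :=
  if Even n then
    -((n : ℂ) * ((n : ℂ) + 2*c + 2*d + 1)) / (2 * ((n : ℂ) + a + b + c + d + 1))
  else
    -(((n : ℂ) + 2*b + 2*c + 1) * ((n : ℂ) + 2*b + 2*d + 1))
      / (2 * ((n : ℂ) + a + b + c + d + 1))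

/-- Diagonal recurrence coefficient `cₙ = -i(2𝔞 + 1 - Aₙ - Cₙ)` of the modified
Bannai–Ito polynomials. -/
noncomputable def ccoef (a b c d : ℂ) (n : ℕ) : ℂ :=
  -I * (2*a + 1 - Acoef a b c d n - Ccoef a b c d n)

/-- With `𝔞 = α+iβ, 𝔟 = γ+iδ, 𝔠 = α-iβ, 𝔡 = γ-iδ` (α, β, γ, δ real, α, γ > 0),
the coefficient `cₙ` is real for every `n`, and for `n` even it equals
`2β - (n+4α+2)(β-δ)/(n+2α+2γ+2) - n(β+δ)/(n+2α+2γ+1)`. -/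
theorem ccoef_real (α β γ δ : ℝ) (hα : 0 < α) (hγ : 0 < γ) (n : ℕ) :
    (ccoef ((α : ℂ) + β * I) ((γ : ℂ) + δ * I) ((α : ℂ) - β * I) ((γ : ℂ) - δ * I) n).im = 0 ∧
    (Even n →
      ccoef ((α : ℂ) + β * I) ((γ : ℂ) + δ * I) ((α : ℂ) - β * I) ((γ : ℂ) - δ * I) n
        = ((2*β - ((n : ℝ) + 4*α + 2) * (β - δ) / ((n : ℝ) + 2*α + 2*γ + 2)
            - (n : ℝ) * (β + δ) / ((n : ℝ) + 2*α + 2*γ + 1) : ℝ) : ℂ)) := by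

  -- nonzero real denominators
  have hx2 : ((n : ℝ) + 2*α + 2*γ + 2) ≠ 0 := by positivity
  have hx1 : ((n : ℝ) + 2*α + 2*γ + 1) ≠ 0 := by positivity
  have hc2 : ((n : ℂ) + ((α : ℂ) + β * I) + ((γ : ℂ) + δ * I) + ((α : ℂ) - β * I)
      + ((γ : ℂ) - δ * I) + 2) = (((n : ℝ) + 2*α + 2*γ + 2 : ℝ) : ℂ) := by
    push_cast; ring
  have hc1 : ((n : ℂ) + ((α : ℂ) + β * I) + ((γ : ℂ) + δ * I) + ((α : ℂ) - β * I)
      + ((γ : ℂ) - δ * I) + 1) = (((n : ℝ) + 2*α + 2*γ + 1 : ℝ) : ℂ) := by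
    push_cast; ring
  have hC2 : ((n : ℂ) + ((α : ℂ) + β * I) + ((γ : ℂ) + δ * I) + ((α : ℂ) - β * I)
      + ((γ : ℂ) - δ * I) + 2) ≠ 0 := by rw [hc2]; exact_mod_cast hx2
  have hC1 : ((n : ℂ) + ((α : ℂ) + β * I) + ((γ : ℂ) + δ * I) + ((α : ℂ) - β * I)
      + ((γ : ℂ) - δ * I) + 1) ≠ 0 := by rw [hc1]; exact_mod_cast hx1
  have hx2C : (((n : ℝ) + 2*α + 2*γ + 2 : ℝ) : ℂ) ≠ 0 := by exact_mod_cast hx2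
  have hx1C : (((n : ℝ) + 2*α + 2*γ + 1 : ℝ) : ℂ) ≠ 0 := by exact_mod_cast hx1
  have hz2 : ((n : ℂ) + 2*(α:ℂ) + 2*(γ:ℂ) + 2) ≠ 0 := by
    have : ((n : ℂ) + 2*(α:ℂ) + 2*(γ:ℂ) + 2) = (((n : ℝ) + 2*α + 2*γ + 2 : ℝ) : ℂ) := by push_cast; ring
    rw [this]; exact_mod_cast hx2
  have hz1 : ((n : ℂ) + 2*(α:ℂ) + 2*(γ:ℂ) + 1) ≠ 0 := by
    have : ((n : ℂ) + 2*(α:ℂ) + 2*(γ:ℂ) + 1) = (((n : ℝ) + 2*α + 2*γ + 1 : ℝ) : ℂ) := by push_cast; ring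
    rw [this]; exact_mod_cast hx1
  by_cases hn : Even n
  · -- even case
    have key : ccoef ((α : ℂ) + β * I) ((γ : ℂ) + δ * I) ((α : ℂ) - β * I) ((γ : ℂ) - δ * I) n
        = ((2*β - ((n : ℝ) + 4*α + 2) * (β - δ) / ((n : ℝ) + 2*α + 2*γ + 2)
            - (n : ℝ) * (β + δ) / ((n : ℝ) + 2*α + 2*γ + 1) : ℝ) : ℂ) := by
      have inner : (2*((α : ℂ) + β * I) + 1
          - Acoef ((α : ℂ) + β * I) ((γ : ℂ) + δ * I) ((α : ℂ) - β * I) ((γ : ℂ) - δ * I) n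
          - Ccoef ((α : ℂ) + β * I) ((γ : ℂ) + δ * I) ((α : ℂ) - β * I) ((γ : ℂ) - δ * I) n)
          = ((2*β - ((n : ℝ) + 4*α + 2) * (β - δ) / ((n : ℝ) + 2*α + 2*γ + 2)
            - (n : ℝ) * (β + δ) / ((n : ℝ) + 2*α + 2*γ + 1) : ℝ) : ℂ) * I := by
        rw [Acoef, Ccoef, if_pos hn, if_pos hn]
        rw [hc2, hc1]
        push_cast
        field_simp [hC2, hC1, hz2, hz1]
        ring
      rw [ccoef, inner]
      rw [show ∀ z : ℂ, -I * (z * I) = z from fun z => by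
        rw [mul_comm z I, ← mul_assoc, neg_mul, Complex.I_mul_I]; ring]
    exact ⟨by rw [key]; exact Complex.ofReal_im _, fun _ => key⟩
  · -- odd case
    have key : ccoef ((α : ℂ) + β * I) ((γ : ℂ) + δ * I) ((α : ℂ) - β * I) ((γ : ℂ) - δ * I) n
        = ((2*β - (β + δ) * ((n : ℝ) + 4*α + 4*γ + 3) / ((n : ℝ) + 2*α + 2*γ + 2)
            - (β - δ) * ((n : ℝ) + 4*γ + 1) / ((n : ℝ) + 2*α + 2*γ + 1) : ℝ) : ℂ) := by
      have inner : (2*((α : ℂ) + β * I) + 1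
          - Acoef ((α : ℂ) + β * I) ((γ : ℂ) + δ * I) ((α : ℂ) - β * I) ((γ : ℂ) - δ * I) n
          - Ccoef ((α : ℂ) + β * I) ((γ : ℂ) + δ * I) ((α : ℂ) - β * I) ((γ : ℂ) - δ * I) n)
          = ((2*β - (β + δ) * ((n : ℝ) + 4*α + 4*γ + 3) / ((n : ℝ) + 2*α + 2*γ + 2)
            - (β - δ) * ((n : ℝ) + 4*γ + 1) / ((n : ℝ) + 2*α + 2*γ + 1) : ℝ) : ℂ) * I := by
        rw [Acoef, Ccoef, if_neg hn, if_neg hn]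
        rw [hc2, hc1]
        push_cast
        field_simp [hC2, hC1, hz2, hz1]
        ring
      rw [ccoef, inner]
      rw [show ∀ z : ℂ, -I * (z * I) = z from fun z => by
        rw [mul_comm z I, ← mul_assoc, neg_mul, Complex.I_mul_I]; ring]
    exact ⟨by rw [key]; exact Complex.ofReal_im _, fun h => absurd h hn⟩
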